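/- Let F be a field, let k ≥ 2 and n ≥ 2k−2 be integers, and let x_1, …, x_k ∈ F with x_k ≠ 0. Fix an index i with 1 ≤ i ≤ k, and let M be the n×n k-diagonal circulant matrix with diagonal entry x_i, i.e., the matrix whose (p,q) entry equals x_j if there exists j ∈ {1,…,k} with j ≡ i + q − p (mod n), and equals 0 otherwise. Let A = D be the (k−1)×(k−1) lower-triangular Toeplitz matrix with (p,q) entry x_{k+q−p} for q ≤ p and 0 otherwise; let B = C be the (k−1)×(k−1) upper-triangular Toeplitz matrix with (p,q) entry x_{1+q−p} for q ≥ p and 0 otherwise; and let T be the (k−1)×(k−1) matrix with (T)_{p,1} = −x_{k−p}/x_k for 1 ≤ p ≤ k−1, (T)_{p,p+1} = 1 for 1 ≤ p ≤ k−2, and 0 otherwise. Then det M = (−1)^{(k−i)(n−k+i)} · x_k^{n−k+1} · det(D − C A^{−1} T^{n−2k+2} B). -/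

import Mathlib

open Matrix

namespace Stmt2Aux

noncomputable def yseq {F : Type*} [Field F] (k : ℕ) (x : ℕ → F) : ℕ → F
  | d =>
    ((if d = 0 then 1 else 0) -
      ∑ t ∈ (Finset.Icc 1 (min d (k - 1))).attach,
        x (k - t.1) * yseq k x (d - t.1)) / x k
termination_by d => d
decreasing_by
  have ht := Finset.mem_Icc.mp t.2; omega

variable {F : Type*} [Field F]

lemma yseq_rec (k : ℕ) (x : ℕ → F) (hx : x k ≠ 0) (d : ℕ) :
    ∑ t ∈ Finset.range (min d (k - 1) + 1), x (k - t) * yseq k x (d - t)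
      = if d = 0 then 1 else 0 := by
  rw [Finset.sum_range_succ']
  have h1 : ∑ i ∈ Finset.range (min d (k - 1)), x (k - (i + 1)) * yseq k x (d - (i + 1))
      = ∑ t ∈ Finset.Icc 1 (min d (k - 1)), x (k - t) * yseq k x (d - t) := by
    apply Finset.sum_nbij' (fun i => i + 1) (fun t => t - 1)
    · intro a ha; simp only [Finset.mem_range] at ha; simp only [Finset.mem_Icc]; omega
    · intro a ha; simp only [Finset.mem_Icc] at ha; simp only [Finset.mem_range]; omega
    · intro a _; omega
    · intro a ha; simp only [Finset.mem_Icc] at ha; omega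
    · intro a _; rfl
  rw [h1, yseq]
  simp only [Nat.sub_zero]
  rw [Finset.sum_attach (Finset.Icc 1 (min d (k - 1))) (fun t => x (k - t) * yseq k x (d - t))]
  field_simp
  ring

/-- banded lower-triangular Toeplitz matrix of size N -/
def Pm (k : ℕ) (x : ℕ → F) (N : ℕ) : Matrix (Fin N) (Fin N) F :=
  fun p q => if q.1 ≤ p.1 ∧ p.1 - q.1 ≤ k - 1 then x (k - (p.1 - q.1)) else 0

/-- its inverse: lower-triangular Toeplitz from yseq -/
noncomputable def Ym (k : ℕ) (x : ℕ → F) (N : ℕ) : Matrix (Fin N) (Fin N) F :=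
  fun p q => if q.1 ≤ p.1 then yseq k x (p.1 - q.1) else 0

def Tm (k : ℕ) (x : ℕ → F) : Matrix (Fin (k - 1)) (Fin (k - 1)) F :=
  fun p q => if q.1 = 0 then -x (k - 1 - p.1) / x k
    else if q.1 = p.1 + 1 then 1 else 0

lemma Pm_mul_Ym (k : ℕ) (x : ℕ → F) (hx : x k ≠ 0) (N : ℕ) :
    Pm k x N * Ym k x N = 1 := by
  ext p q
  rw [Matrix.mul_apply, Matrix.one_apply]
  have hconv : ∑ s : Fin N, Pm k x N p s * Ym k x N s q
      = ∑ s ∈ Finset.range N,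
        ((if s ≤ p.1 ∧ p.1 - s ≤ k - 1 then x (k - (p.1 - s)) else 0) *
          (if q.1 ≤ s then yseq k x (s - q.1) else 0)) :=
    Fin.sum_univ_eq_sum_range
      (fun s => (if s ≤ p.1 ∧ p.1 - s ≤ k - 1 then x (k - (p.1 - s)) else 0) *
        (if q.1 ≤ s then yseq k x (s - q.1) else 0)) N
  rw [hconv]
  by_cases hpq : q.1 ≤ p.1
  · have hsub : ∑ s ∈ Finset.range N,
        ((if s ≤ p.1 ∧ p.1 - s ≤ k - 1 then x (k - (p.1 - s)) else 0) *
          (if q.1 ≤ s then yseq k x (s - q.1) else 0))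
        = ∑ s ∈ Finset.Icc (max q.1 (p.1 - (k - 1))) p.1,
        ((if s ≤ p.1 ∧ p.1 - s ≤ k - 1 then x (k - (p.1 - s)) else 0) *
          (if q.1 ≤ s then yseq k x (s - q.1) else 0)) := by
      refine (Finset.sum_subset ?_ ?_).symm
      · intro s hs; simp only [Finset.mem_Icc] at hs; simp only [Finset.mem_range]; omega
      · intro s hs hns
        simp only [Finset.mem_range] at hs
        simp only [Finset.mem_Icc] at hns
        split_ifs with h1 h2 <;> first | (exfalso; omega) | ring
    rw [hsub]
    have hbij : ∑ s ∈ Finset.Icc (max q.1 (p.1 - (k - 1))) p.1,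
        ((if s ≤ p.1 ∧ p.1 - s ≤ k - 1 then x (k - (p.1 - s)) else 0) *
          (if q.1 ≤ s then yseq k x (s - q.1) else 0))
        = ∑ t ∈ Finset.range (min (p.1 - q.1) (k - 1) + 1),
          x (k - t) * yseq k x (p.1 - q.1 - t) := by
      apply Finset.sum_nbij' (fun s => p.1 - s) (fun t => p.1 - t)
      · intro a ha; simp only [Finset.mem_Icc] at ha; simp only [Finset.mem_range]; omega
      · intro a ha; simp only [Finset.mem_range] at ha; simp only [Finset.mem_Icc]; omega
      · intro a ha; simp only [Finset.mem_Icc] at ha; omega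
      · intro a ha; simp only [Finset.mem_range] at ha; omega
      · intro a ha
        simp only [Finset.mem_Icc] at ha
        rw [if_pos (by omega : a ≤ p.1 ∧ p.1 - a ≤ k - 1), if_pos (by omega : q.1 ≤ a)]
        have h1 : a - q.1 = p.1 - q.1 - (p.1 - a) := by omega
        rw [h1]
    rw [hbij, yseq_rec k x hx]
    have : p = q ↔ p.1 - q.1 = 0 := by
      rw [Fin.ext_iff]; omega
    split_ifs with h1 h2 h3 <;> first | rfl | (exfalso; omega)
  · rw [if_neg (by intro h; exact hpq (le_of_eq (congrArg Fin.val h.symm)))]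
    apply Finset.sum_eq_zero
    intro s _
    split_ifs with h1 h2 <;> first | (exfalso; omega) | ring

lemma yseq_shift (k : ℕ) (x : ℕ → F) (hx : x k ≠ 0) (d : ℕ) (hd : d ≠ 0) :
    ∑ s ∈ Finset.range (k - 1),
      (if s ≤ d - 1 then yseq k x (d - 1 - s) else 0) * (-x (k - 1 - s) / x k)
    = yseq k x d := by
  have h := yseq_rec k x hx d
  rw [if_neg hd, Finset.sum_range_succ'] at h
  simp only [Nat.sub_zero] at h
  have h2 : ∑ s ∈ Finset.range (k - 1),
      (if s ≤ d - 1 then yseq k x (d - 1 - s) else 0) * (-x (k - 1 - s) / x k)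
      = -(∑ s ∈ Finset.range (k - 1),
          (if s + 1 ≤ d then x (k - (s + 1)) * yseq k x (d - (s + 1)) else 0)) / x k := by
    rw [neg_div, Finset.sum_div, ← Finset.sum_neg_distrib]
    apply Finset.sum_congr rfl
    intro s _
    by_cases hs : s + 1 ≤ d
    · rw [if_pos (by omega : s ≤ d - 1), if_pos hs]
      have e1 : d - 1 - s = d - (s + 1) := by omega
      have e2 : k - 1 - s = k - (s + 1) := by omega
      rw [e1, e2]; ring
    · rw [if_neg (by omega : ¬ s ≤ d - 1), if_neg hs]; ring
  have h3 : ∑ s ∈ Finset.range (k - 1),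
      (if s + 1 ≤ d then x (k - (s + 1)) * yseq k x (d - (s + 1)) else 0)
      = ∑ i ∈ Finset.range (min d (k - 1)), x (k - (i + 1)) * yseq k x (d - (i + 1)) := by
    refine (Finset.sum_subset ?_ ?_).symm.trans (Finset.sum_congr rfl ?_)
    · intro s hs; simp only [Finset.mem_range] at hs ⊢; omega
    · intro s hs hns; simp only [Finset.mem_range] at hs hns
      rw [if_neg (by omega)]
    · intro i hi; simp only [Finset.mem_range] at hi
      rw [if_pos (by omega)]
  rw [h2, h3]
  have h4 : ∑ i ∈ Finset.range (min d (k - 1)), x (k - (i + 1)) * yseq k x (d - (i + 1))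
      = -(x k * yseq k x d) := by linear_combination h
  rw [h4]
  field_simp

lemma Ym_mul_Tpow (k : ℕ) (x : ℕ → F) (hx : x k ≠ 0) (hk : 2 ≤ k) (j : ℕ) :
    ∀ r c : Fin (k - 1), (Ym k x (k - 1) * (Tm k x) ^ j) r c
      = if c.1 ≤ j + r.1 then yseq k x (j + r.1 - c.1) else 0 := by
  induction j with
  | zero =>
    intro r c
    simp only [pow_zero, Matrix.mul_one, Ym, zero_add]
  | succ j ih =>
    intro r c
    rw [pow_succ, ← Matrix.mul_assoc, Matrix.mul_apply]
    by_cases hc : c.1 = 0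
    · have hsum : ∑ s : Fin (k - 1), (Ym k x (k - 1) * Tm k x ^ j) r s * Tm k x s c
          = ∑ s ∈ Finset.range (k - 1),
            (if s ≤ j + r.1 then yseq k x (j + r.1 - s) else 0) * (-x (k - 1 - s) / x k) := by
        rw [← Fin.sum_univ_eq_sum_range
          (fun s => (if s ≤ j + r.1 then yseq k x (j + r.1 - s) else 0) * (-x (k - 1 - s) / x k))]
        apply Finset.sum_congr rfl
        intro s _
        rw [ih r s]
        simp only [Tm, if_pos hc]
      rw [hsum]
      have := yseq_shift k x hx (j + 1 + r.1) (by omega)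
      have e1 : j + 1 + r.1 - 1 = j + r.1 := by omega
      rw [e1] at this
      rw [this, if_pos (by omega : c.1 ≤ j + 1 + r.1)]
      congr 1
      omega
    · have hck : c.1 - 1 < k - 1 := by omega
      rw [Finset.sum_eq_single (⟨c.1 - 1, hck⟩ : Fin (k - 1))]
      · rw [ih r ⟨c.1 - 1, hck⟩]
        have hv : ((⟨c.1 - 1, hck⟩ : Fin (k - 1)) : ℕ) = c.1 - 1 := rfl
        rw [hv]
        have hT : Tm k x ⟨c.1 - 1, hck⟩ c = 1 := by
          simp only [Tm, if_neg hc]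
          rw [if_pos (by omega)]
        rw [hT, mul_one]
        split_ifs with h1 h2 h3 <;> first | (exfalso; omega) | rfl | (congr 1; omega)
      · intro s _ hs
        have hT : Tm k x s c = 0 := by
          simp only [Tm, if_neg hc]
          rw [if_neg]
          intro h
          apply hs
          apply Fin.ext
          have hv : ((⟨c.1 - 1, hck⟩ : Fin (k - 1)) : ℕ) = c.1 - 1 := rfl
          rw [hv]; omega
        rw [hT, mul_zero]
      · intro h; exact absurd (Finset.mem_univ _) h

def Bm (k : ℕ) (x : ℕ → F) : Matrix (Fin (k - 1)) (Fin (k - 1)) F :=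
  fun p q => if p.1 ≤ q.1 then x (1 + (q.1 - p.1)) else 0

def Qm (k : ℕ) (x : ℕ → F) (s : ℕ) : Matrix (Fin s) (Fin (k - 1)) F :=
  fun p c => if p.1 ≤ c.1 then x (1 + (c.1 - p.1)) else 0

def Rm (k : ℕ) (x : ℕ → F) (s m : ℕ) : Matrix (Fin (k - 1)) (Fin s) F :=
  fun r q => if m + r.1 ≤ q.1 then x (1 + (q.1 - (m + r.1))) else 0

def Eup (s k : ℕ) : Matrix (Fin s) (Fin (k - 1)) F :=
  fun p c => if p.1 = c.1 then 1 else 0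

def Elow (k s m : ℕ) : Matrix (Fin (k - 1)) (Fin s) F :=
  fun r q => if q.1 = m + r.1 then 1 else 0

lemma Qm_eq (k : ℕ) (x : ℕ → F) (s : ℕ) (hks : k - 1 ≤ s) :
    Qm k x s = Eup (F := F) s k * Bm k x := by
  ext p c
  rw [Matrix.mul_apply]
  simp only [Eup, Qm, Bm]
  by_cases hp : p.1 < k - 1
  · rw [Finset.sum_eq_single (⟨p.1, hp⟩ : Fin (k - 1))]
    · rw [if_pos rfl, one_mul]
    · intro b _ hb
      rw [if_neg (fun h => hb (Fin.ext h.symm)), zero_mul]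
    · intro h; exact absurd (Finset.mem_univ _) h
  · rw [Finset.sum_eq_zero, if_neg (by omega)]
    intro b _
    rw [if_neg (by intro h; omega), zero_mul]

lemma Rm_eq (k : ℕ) (x : ℕ → F) (s m : ℕ) (hsm : s = m + (k - 1)) :
    Rm k x s m = Bm k x * Elow (F := F) k s m := by
  ext r q
  rw [Matrix.mul_apply]
  simp only [Elow, Rm, Bm]
  by_cases hq : m ≤ q.1
  · have hqk : q.1 - m < k - 1 := by omega
    rw [Finset.sum_eq_single (⟨q.1 - m, hqk⟩ : Fin (k - 1))]
    · rw [show (if q.1 = m + ((⟨q.1 - m, hqk⟩ : Fin (k - 1)) : ℕ) then (1:F) else 0) = 1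
        from if_pos (by show q.1 = m + (q.1 - m); omega), mul_one]
      have hv : ((⟨q.1 - m, hqk⟩ : Fin (k - 1)) : ℕ) = q.1 - m := rfl
      rw [hv]
      split_ifs with h1 h2 h3 <;> first | (exfalso; omega) | rfl | (congr 1; omega)
    · intro b _ hb
      rw [show (if q.1 = m + (b : ℕ) then (1:F) else 0) = 0
        from if_neg (by intro h; exact hb (Fin.ext (show b.1 = q.1 - m by omega))), mul_zero]
    · intro h; exact absurd (Finset.mem_univ _) h
  · rw [Finset.sum_eq_zero, if_neg (by omega)]
    intro b _
    rw [show (if q.1 = m + (b : ℕ) then (1:F) else 0) = 0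
      from if_neg (by intro h; omega), mul_zero]

lemma EYE (k : ℕ) (x : ℕ → F) (hx : x k ≠ 0) (hk : 2 ≤ k) (s m : ℕ) (hsm : s = m + (k - 1)) :
    Elow (F := F) k s m * Ym k x s * Eup (F := F) s k = Ym k x (k - 1) * (Tm k x) ^ m := by
  ext r c
  rw [Ym_mul_Tpow k x hx hk m r c, Matrix.mul_apply]
  have hcs : c.1 < s := by omega
  rw [Finset.sum_eq_single (⟨c.1, hcs⟩ : Fin s)]
  · rw [show Eup (F := F) s k ⟨c.1, hcs⟩ c = 1 from if_pos rfl, mul_one, Matrix.mul_apply]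
    have hmr : m + r.1 < s := by omega
    rw [Finset.sum_eq_single (⟨m + r.1, hmr⟩ : Fin s)]
    · rw [show Elow (F := F) k s m r ⟨m + r.1, hmr⟩ = 1 from if_pos rfl, one_mul]
      rfl
    · intro b _ hb
      rw [show Elow (F := F) k s m r b = 0 from if_neg (fun h => hb (Fin.ext h)), zero_mul]
    · intro h; exact absurd (Finset.mem_univ _) h
  · intro b _ hb
    rw [show Eup (F := F) s k b c = 0 from if_neg (fun h => hb (Fin.ext h)), mul_zero]
  · intro h; exact absurd (Finset.mem_univ _) h

lemma mod_small (n a : ℕ) (h : a < 2 * n) : a % n = if a < n then a else a - n := by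
  split_ifs with h'
  · exact Nat.mod_eq_of_lt h'
  · rw [Nat.mod_eq_sub_mod (not_lt.mp h'), Nat.mod_eq_of_lt (by omega)]

lemma zmod_cond (n k i j p q : ℕ) [NeZero n] (hkn : k ≤ n) (hi : i ≤ k)
    (hj1 : 1 ≤ j) (hjk : j ≤ k) (hp : p < n) (hq : q < n) :
    ((j : ZMod n) = (i : ZMod n) + ((q : ZMod n) + ((k - i : ℕ) : ZMod n)) - (p : ZMod n))
      ↔ j + ((p + n - q) % n) = k := by
  have hn : 0 < n := NeZero.pos n
  have h1 : ((j : ZMod n) = (i : ZMod n) + ((q : ZMod n) + ((k - i : ℕ) : ZMod n)) - (p : ZMod n))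
      ↔ ((j + p : ℕ) : ZMod n) = ((k + q : ℕ) : ZMod n) := by
    rw [eq_sub_iff_add_eq, Nat.cast_sub hi]
    push_cast
    constructor
    · intro h; linear_combination h
    · intro h; linear_combination h
  rw [h1, ZMod.natCast_eq_natCast_iff]
  show (j + p) % n = (k + q) % n ↔ _
  rw [mod_small n (j + p) (by omega), mod_small n (k + q) (by omega),
    mod_small n (p + n - q) (by omega)]
  split_ifs <;> omega

lemma addRight_one_pow (n : ℕ) (a : ℕ) :
    (Equiv.addRight (1 : ZMod n)) ^ a = Equiv.addRight ((a : ℕ) : ZMod n) := by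
  induction a with
  | zero => ext z; simp
  | succ a ih =>
    rw [pow_succ, ih]
    ext z
    simp only [Equiv.Perm.mul_apply, Equiv.coe_addRight]
    push_cast
    ring

def zmodFinEquiv (m : ℕ) : Fin (m + 1) ≃ ZMod (m + 1) :=
  { toFun := fun a => ((a : ℕ) : ZMod (m + 1))
    invFun := fun z => ⟨z.val, ZMod.val_lt z⟩
    left_inv := fun a => by
      ext
      simp [ZMod.val_natCast, Nat.mod_eq_of_lt a.2]
    right_inv := fun z => ZMod.natCast_rightInverse z }

lemma sign_addRight_one (n : ℕ) [NeZero n] :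
    Equiv.Perm.sign (Equiv.addRight (1 : ZMod n)) = (-1) ^ (n - 1) := by
  obtain ⟨m, rfl⟩ : ∃ m, n = m + 1 := ⟨n - 1, by have := NeZero.pos n; omega⟩
  set e : Fin (m + 1) ≃ ZMod (m + 1) := zmodFinEquiv m with he
  have key : Equiv.addRight (1 : ZMod (m + 1)) = e.permCongr (finRotate (m + 1)) := by
    ext z
    rw [Equiv.permCongr_apply]
    show z + 1 = (((finRotate (m + 1) (e.symm z) : Fin (m + 1)) : ℕ) : ZMod (m + 1))
    rw [finRotate_succ_apply]
    have hval : (((e.symm z + 1 : Fin (m + 1)) : Fin (m+1)) : ℕ)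
        = ((e.symm z : Fin (m+1)).1 + 1) % (m + 1) := by
      rw [Fin.add_def]
      simp [Fin.val_one]
    rw [hval, ZMod.natCast_mod]
    push_cast
    have : (((e.symm z : Fin (m+1)).1 : ℕ) : ZMod (m + 1)) = z := by
      show ((z.val : ℕ) : ZMod (m + 1)) = z
      exact ZMod.natCast_rightInverse z
    rw [this]
  rw [key, Equiv.Perm.sign_permCongr, sign_finRotate]

def zfe (n : ℕ) [NeZero n] : Fin n ≃ ZMod n :=
  { toFun := fun a => ((a : ℕ) : ZMod n)
    invFun := fun z => ⟨z.val, ZMod.val_lt z⟩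
    left_inv := fun a => by
      ext
      simp [ZMod.val_natCast, Nat.mod_eq_of_lt a.2]
    right_inv := fun z => ZMod.natCast_rightInverse z }

lemma neg_one_pow_par (a b : ℕ) (h : a % 2 = b % 2) : (-1 : F) ^ a = (-1 : F) ^ b := by
  rcases Nat.even_or_odd a with ha | ha
  · have hb : Even b := by rw [Nat.even_iff]; rw [Nat.even_iff] at ha; omega
    rw [ha.neg_one_pow, hb.neg_one_pow]
  · have hb : Odd b := by rw [Nat.odd_iff]; rw [Nat.odd_iff] at ha; omega
    rw [ha.neg_one_pow, hb.neg_one_pow]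

end Stmt2Aux

open Stmt2Aux

/-- The determinant of the `n × n` `k`-diagonal circulant matrix `M`
with diagonal entry `x_i` (the `(p,q)` entry of `M` equals `x_j` if some
`j ∈ {1,…,k}` satisfies `j ≡ i + q - p (mod n)`, and `0` otherwise) equals
`(-1)^((k-i)(n-k+i)) * x_k^(n-k+1) * det (D - C A⁻¹ T^(n-2k+2) B)`.
Rows and columns are labelled cyclically by `ZMod n`; `Fin` indices of the
`(k-1) × (k-1)` blocks are 0-based versions of 1-based indices. -/
theorem stmt_2 {F : Type*} [Field F] (k n : ℕ) [NeZero n]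
    (hk : 2 ≤ k) (hn : 2 * k - 2 ≤ n)
    (x : ℕ → F) (hx : x k ≠ 0)
    (i : ℕ) (hi1 : 1 ≤ i) (hik : i ≤ k)
    (M : Matrix (ZMod n) (ZMod n) F)
    (hMx : ∀ p q : ZMod n, ∀ j : ℕ, 1 ≤ j → j ≤ k →
      (j : ZMod n) = (i : ZMod n) + q - p → M p q = x j)
    (hM0 : ∀ p q : ZMod n, (∀ j : ℕ, 1 ≤ j → j ≤ k →
      (j : ZMod n) ≠ (i : ZMod n) + q - p) → M p q = 0)
    (A D B C T : Matrix (Fin (k - 1)) (Fin (k - 1)) F)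
    (hA : ∀ p q : Fin (k - 1),
      A p q = if q.val ≤ p.val then x (k - (p.val - q.val)) else 0)
    (hD : D = A)
    (hB : ∀ p q : Fin (k - 1),
      B p q = if p.val ≤ q.val then x (1 + (q.val - p.val)) else 0)
    (hC : C = B)
    (hT : ∀ p q : Fin (k - 1),
      T p q = if q.val = 0 then -x (k - 1 - p.val) / x k
        else if q.val = p.val + 1 then 1 else 0) :
    M.det = (-1 : F) ^ ((k - i) * (n + i - k)) * x k ^ (n + 1 - k) *
      (D - C * A⁻¹ * T ^ (n + 2 - 2 * k) * B).det := by
  classical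
  have hn0 : 0 < n := NeZero.pos n
  have hkn : k ≤ n := by omega
  set s : ℕ := n - k + 1 with hs
  set m : ℕ := n + 2 - 2 * k with hm
  have hsm : s = m + (k - 1) := by omega
  have hsum : s + (k - 1) = n := by omega
  have hks : k - 1 ≤ s := by omega
  -- identify hypothesis matrices with our defs
  have hAeq : A = Pm k x (k - 1) := by
    ext p q
    rw [hA p q]
    show _ = if q.1 ≤ p.1 ∧ p.1 - q.1 ≤ k - 1 then x (k - (p.1 - q.1)) else 0
    have := p.2
    split_ifs with h1 h2 h2 <;> first | rfl | omega
  have hBeq : B = Bm k x := by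
    ext p q; rw [hB p q]; rfl
  have hTeq : T = Tm k x := by
    ext p q; rw [hT p q]; rfl
  have hPY := Pm_mul_Ym k x hx s
  have hAY := Pm_mul_Ym k x hx (k - 1)
  have hAmY : Pm k x (k - 1) * Ym k x (k - 1) = 1 := by
    have h := hAY
    convert h using 2
  have hAinv : A⁻¹ = Ym k x (k - 1) := by
    rw [hAeq]
    exact Matrix.inv_eq_right_inv hAmY
  -- the column shift
  set cs : ZMod n := ((k - i : ℕ) : ZMod n) with hcs
  set σ : Equiv.Perm (ZMod n) := Equiv.addRight cs with hσ
  set M₂ : Matrix (ZMod n) (ZMod n) F := M.submatrix id σ with hM₂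
  have hperm : M₂.det = (Equiv.Perm.sign σ : ℤ) * M.det := Matrix.det_permute' σ M
  -- the reindexing equivalence
  set e : (Fin s ⊕ Fin (k - 1)) ≃ ZMod n :=
    (finSumFinEquiv.trans (finCongr hsum)).trans (zfe n) with he
  have heL : ∀ p : Fin s, e (Sum.inl p) = ((p : ℕ) : ZMod n) := by
    intro p
    show ((((finCongr hsum) (finSumFinEquiv (Sum.inl p))) : ℕ) : ZMod n) = ((p : ℕ) : ZMod n)
    congr 1
  have heR : ∀ r : Fin (k - 1), e (Sum.inr r) = (((s + r : ℕ) : ℕ) : ZMod n) := by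
    intro r
    show ((((finCongr hsum) (finSumFinEquiv (Sum.inr r))) : ℕ) : ZMod n) = _
    congr 1
  -- block decomposition
  have hblock : M₂.submatrix e e
      = Matrix.fromBlocks (Pm k x s) (Qm k x s) (Rm k x s m) (Pm k x (k - 1)) := by
    ext u v
    cases u with
    | inl p =>
      cases v with
      | inl q =>
        simp only [Matrix.submatrix_apply, hM₂, id_eq, hσ, Equiv.coe_addRight, heL,
          Matrix.fromBlocks_apply₁₁]
        by_cases hpq : q.1 ≤ p.1 ∧ p.1 - q.1 ≤ k - 1
        · rw [show Pm (F := F) k x s p q = x (k - (p.1 - q.1)) from if_pos hpq]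
          apply hMx _ _ (k - (p.1 - q.1)) (by omega) (by omega)
          apply (zmod_cond n k i _ p.1 q.1 hkn hik (by omega) (by omega)
            (by omega) (by omega)).mpr
          rw [mod_small n (p.1 + n - q.1) (by omega)]
          split_ifs <;> omega
        · rw [show Pm (F := F) k x s p q = 0 from if_neg hpq]
          apply hM0
          intro j hj1 hjk hcond
          have := (zmod_cond n k i j p.1 q.1 hkn hik hj1 hjk (by omega) (by omega)).mp hcond
          rw [mod_small n (p.1 + n - q.1) (by omega)] at this
          have hq2 := q.2
          split_ifs at this <;> omega
      | inr c =>
        simp only [Matrix.submatrix_apply, hM₂, id_eq, hσ, Equiv.coe_addRight, heL, heR,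
          Matrix.fromBlocks_apply₁₂]
        by_cases hpc : p.1 ≤ c.1
        · rw [show Qm (F := F) k x s p c = x (1 + (c.1 - p.1)) from if_pos hpc]
          apply hMx _ _ (1 + (c.1 - p.1)) (by omega) (by omega)
          apply (zmod_cond n k i _ p.1 (s + c.1) hkn hik (by omega) (by omega)
            (by omega) (by omega)).mpr
          rw [mod_small n (p.1 + n - (s + c.1)) (by omega)]
          have := c.2
          split_ifs <;> omega
        · rw [show Qm (F := F) k x s p c = 0 from if_neg hpc]
          apply hM0
          intro j hj1 hjk hcond
          have := (zmod_cond n k i j p.1 (s + c.1) hkn hik hj1 hjk (by omega)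
            (by omega)).mp hcond
          have hc2 := c.2
          rw [mod_small n (p.1 + n - (s + c.1)) (by omega)] at this
          split_ifs at this <;> omega
    | inr r =>
      cases v with
      | inl q =>
        simp only [Matrix.submatrix_apply, hM₂, id_eq, hσ, Equiv.coe_addRight, heL, heR,
          Matrix.fromBlocks_apply₂₁]
        by_cases hrq : m + r.1 ≤ q.1
        · rw [show Rm (F := F) k x s m r q = x (1 + (q.1 - (m + r.1))) from if_pos hrq]
          apply hMx _ _ (1 + (q.1 - (m + r.1))) (by omega) (by omega)
          apply (zmod_cond n k i _ (s + r.1) q.1 hkn hik (by omega) (by omega)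
            (by omega) (by omega)).mpr
          rw [mod_small n (s + r.1 + n - q.1) (by omega)]
          have := r.2
          have := q.2
          split_ifs <;> omega
        · rw [show Rm (F := F) k x s m r q = 0 from if_neg hrq]
          apply hM0
          intro j hj1 hjk hcond
          have := (zmod_cond n k i j (s + r.1) q.1 hkn hik hj1 hjk (by omega)
            (by omega)).mp hcond
          have hr2 := r.2
          have hq2 := q.2
          rw [mod_small n (s + r.1 + n - q.1) (by omega)] at this
          split_ifs at this <;> omega
      | inr c =>
        simp only [Matrix.submatrix_apply, hM₂, id_eq, hσ, Equiv.coe_addRight, heR,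
          Matrix.fromBlocks_apply₂₂]
        by_cases hrc : c.1 ≤ r.1
        · rw [show Pm (F := F) k x (k - 1) r c = x (k - (r.1 - c.1)) from
            if_pos ⟨hrc, by omega⟩]
          apply hMx _ _ (k - (r.1 - c.1)) (by have := r.2; omega) (by omega)
          apply (zmod_cond n k i _ (s + r.1) (s + c.1) hkn hik
            (by have := r.2; omega) (by omega) (by omega) (by omega)).mpr
          rw [mod_small n (s + r.1 + n - (s + c.1)) (by omega)]
          have := r.2
          split_ifs <;> omega
        · rw [show Pm (F := F) k x (k - 1) r c = 0 from if_neg (by omega)]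
          apply hM0
          intro j hj1 hjk hcond
          have := (zmod_cond n k i j (s + r.1) (s + c.1) hkn hik hj1 hjk (by omega)
            (by omega)).mp hcond
          have hr2 := r.2
          have hc2 := c.2
          rw [mod_small n (s + r.1 + n - (s + c.1)) (by omega)] at this
          split_ifs at this <;> omega
  -- determinant of the block matrix
  haveI : Invertible (Pm k x s) := Matrix.invertibleOfIsUnitDet _ (Matrix.isUnit_det_of_right_inverse hPY)
  have hPinv : ⅟ (Pm k x s) = Ym k x s := by
    rw [Matrix.invOf_eq_nonsing_inv]
    exact Matrix.inv_eq_right_inv hPY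
  have hdet2 : M₂.det
      = (Pm k x s).det * (Pm k x (k - 1) - Rm k x s m * Ym k x s * Qm k x s).det := by
    rw [← Matrix.det_submatrix_equiv_self e M₂, hblock, Matrix.det_fromBlocks₁₁, hPinv]
  have hdetP : (Pm k x s).det = x k ^ s := by
    rw [Matrix.det_of_lowerTriangular (Pm k x s) ?_]
    · have hdiag : ∀ u : Fin s, Pm k x s u u = x k := by
        intro u
        rw [show Pm (F := F) k x s u u = x (k - (u.1 - u.1)) from if_pos ⟨le_refl _, by omega⟩]
        congr 1
        omega
      rw [Finset.prod_congr rfl (fun u _ => hdiag u), Finset.prod_const]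
      simp
    · intro a b hab
      have : (a : ℕ) < b := hab
      exact if_neg (by omega)
  have hmid : Rm k x s m * Ym k x s * Qm k x s
      = Bm k x * (Ym k x (k - 1) * Tm k x ^ m) * Bm k x := by
    rw [Rm_eq k x s m hsm, Qm_eq k x s hks, ← EYE k x hx hk s m hsm]
    simp only [Matrix.mul_assoc]
  -- sign computation
  have hsgn : Equiv.Perm.sign σ = (-1 : ℤˣ) ^ ((n - 1) * (k - i)) := by
    rw [hσ, hcs, ← addRight_one_pow n (k - i), map_pow, sign_addRight_one, ← pow_mul]
  have hsF : ((Equiv.Perm.sign σ : ℤ) : F) = (-1 : F) ^ ((n - 1) * (k - i)) := by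
    rw [hsgn]
    push_cast
    ring
  have hsq : ((Equiv.Perm.sign σ : ℤ) : F) * ((Equiv.Perm.sign σ : ℤ) : F) = 1 := by
    rw [hsF, ← pow_add]
    exact Even.neg_one_pow ⟨(n - 1) * (k - i), by ring⟩
  have hMdet : M.det = ((Equiv.Perm.sign σ : ℤ) : F) * M₂.det := by
    rw [hperm, ← mul_assoc, hsq, one_mul]
  -- final assembly
  rw [hMdet, hdet2, hdetP, hmid, hsF]
  have hpar : (-1 : F) ^ ((n - 1) * (k - i)) = (-1 : F) ^ ((k - i) * (n + i - k)) := by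
    apply neg_one_pow_par
    rcases Nat.even_or_odd (k - i) with hki | hki
    · obtain ⟨t, ht⟩ := hki
      rw [Nat.mul_mod, Nat.mul_mod (k - i), show (k - i) % 2 = 0 by omega]
      simp
    · obtain ⟨t, ht⟩ := hki
      rw [Nat.mul_mod, Nat.mul_mod (k - i), show (k - i) % 2 = 1 by omega,
        show (n - 1) % 2 = (n + i - k) % 2 by omega]
      omega
  rw [hpar]
  have hexp : n + 1 - k = s := by omega
  rw [hexp]
  have hfin : D - C * A⁻¹ * T ^ m * B
      = Pm k x (k - 1) - Bm k x * (Ym k x (k - 1) * Tm k x ^ m) * Bm k x := by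
    rw [hD, hC, hAinv, hBeq, hTeq, hAeq]
    simp only [Matrix.mul_assoc]
  rw [hfin]
  ring
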